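/- Let e₁ = pE₁, e₂ = pE₂, e₃ = qE₃ be an orthonormal frame of su(2) (p,q ∈ ℝ nonzero) with brackets [e₁,e₂] = (2p²/q)e₃, [e₂,e₃] = 2qe₁, [e₃,e₁] = 2qe₂. Then for Δ₊ = −(e₁² + e₂² + e₃²) acting on matrix coefficients, Δ₊⟨ρ_n(·)v_k^{(n)},u⟩ = ((−p²+q²)(n−2k)² + p²(n²+2n))⟨ρ_n(·)v_k^{(n)},u⟩. -/
import Mathlib

open Complex MvPolynomial

namespace SU2Casimir

/-- The unitary basis vector v_k^{(n)} = z₁^{n−k} z₂^k / √(k!(n−k)!). -/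
noncomputable def v (n k : ℕ) : MvPolynomial (Fin 2) ℂ :=
  ((1 / Real.sqrt (k.factorial * (n - k).factorial) : ℝ) : ℂ) •
    (X 0 ^ (n - k) * X 1 ^ k)

/-- (dρ_n(A)v)(z₁,z₂) = (∂v/∂z₁, ∂v/∂z₂) ᵗA (z₁,z₂)ᵗ. -/
noncomputable def drho (A : Matrix (Fin 2) (Fin 2) ℂ) (p : MvPolynomial (Fin 2) ℂ) :
    MvPolynomial (Fin 2) ℂ :=
  pderiv 0 p * (C (A 0 0) * X 0 + C (A 1 0) * X 1)
    + pderiv 1 p * (C (A 0 1) * X 0 + C (A 1 1) * X 1)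

noncomputable def E₁ : Matrix (Fin 2) (Fin 2) ℂ := !![0, 1; -1, 0]
noncomputable def E₂ : Matrix (Fin 2) (Fin 2) ℂ := !![0, I; I, 0]
noncomputable def E₃ : Matrix (Fin 2) (Fin 2) ℂ := !![I, 0; 0, -I]

lemma drho_smul (A : Matrix (Fin 2) (Fin 2) ℂ) (c : ℂ) (f : MvPolynomial (Fin 2) ℂ) :
    drho A (c • f) = c • drho A f := by
  simp only [drho, smul_eq_C_mul, pderiv_C_mul]
  ring

lemma drho_add (A : Matrix (Fin 2) (Fin 2) ℂ) (f g : MvPolynomial (Fin 2) ℂ) :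
    drho A (f + g) = drho A f + drho A g := by
  simp only [drho, map_add]
  ring

lemma drho_sub (A : Matrix (Fin 2) (Fin 2) ℂ) (f g : MvPolynomial (Fin 2) ℂ) :
    drho A (f - g) = drho A f - drho A g := by
  simp only [drho, map_sub]
  ring

lemma drho_msmul (A : Matrix (Fin 2) (Fin 2) ℂ) (c : ℂ) (f : MvPolynomial (Fin 2) ℂ) :
    drho (c • A) f = c • drho A f := by
  simp only [drho, Matrix.smul_apply, smul_eq_mul, map_mul, smul_eq_C_mul]
  ring

lemma d1 (a b : ℕ) :
    drho E₁ (X 0 ^ a * X 1 ^ b : MvPolynomial (Fin 2) ℂ)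
      = (b : ℂ) • (X 0 ^ (a + 1) * X 1 ^ (b - 1)) - (a : ℂ) • (X 0 ^ (a - 1) * X 1 ^ (b + 1)) := by
  rcases a with _ | a <;> rcases b with _ | b <;>
    simp [drho, E₁, pderiv_mul, pderiv_pow, pderiv_one, smul_eq_C_mul] <;>
    push_cast <;> ring

lemma d2 (a b : ℕ) :
    drho E₂ (X 0 ^ a * X 1 ^ b : MvPolynomial (Fin 2) ℂ)
      = (I * b) • (X 0 ^ (a + 1) * X 1 ^ (b - 1)) + (I * a) • (X 0 ^ (a - 1) * X 1 ^ (b + 1)) := by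
  rcases a with _ | a <;> rcases b with _ | b <;>
    simp [drho, E₂, pderiv_mul, pderiv_pow, pderiv_one, smul_eq_C_mul] <;>
    push_cast <;> ring

lemma d3 (a b : ℕ) :
    drho E₃ (X 0 ^ a * X 1 ^ b : MvPolynomial (Fin 2) ℂ)
      = (I * ((a : ℂ) - b)) • (X 0 ^ a * X 1 ^ b) := by
  rcases a with _ | a <;> rcases b with _ | b <;>
    simp [drho, E₃, pderiv_mul, pderiv_pow, pderiv_one, smul_eq_C_mul] <;>
    push_cast <;> ring

lemma Ismul (x y : ℂ) (z : MvPolynomial (Fin 2) ℂ) :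
    (I * x) • ((I * y) • z) = (-(x * y)) • z := by
  rw [smul_smul]
  congr 1
  rw [mul_mul_mul_comm, Complex.I_mul_I]
  ring

set_option maxHeartbeats 1000000 in
lemma key_all (a b : ℕ) (p q : ℂ) :
    -(drho (p • E₁) (drho (p • E₁) (X 0 ^ a * X 1 ^ b : MvPolynomial (Fin 2) ℂ))
      + drho (p • E₂) (drho (p • E₂) (X 0 ^ a * X 1 ^ b))
      + drho (q • E₃) (drho (q • E₃) (X 0 ^ a * X 1 ^ b)))
    = (p ^ 2 * (4 * a * b + 2 * a + 2 * b) + q ^ 2 * ((a : ℂ) - b) ^ 2) •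
        (X 0 ^ a * X 1 ^ b) := by
  rcases a with _ | a <;> rcases b with _ | b <;>
    simp only [drho_msmul, drho_smul, drho_sub, drho_add, d1, d2, d3, smul_sub, smul_add,
      Ismul, smul_smul, Nat.add_sub_cancel, Nat.succ_sub_one, Nat.zero_sub, Nat.cast_zero,
      Nat.cast_succ, Nat.cast_add, Nat.cast_one, Nat.cast_ofNat] <;>
    match_scalars <;> ring_nf <;> simp only [Complex.I_sq] <;> push_cast <;> ring

theorem casimir_eigenvalue (p q : ℝ) (hp : p ≠ 0) (hq : q ≠ 0) (n k : ℕ)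
    (hk : k ≤ n) :
    -(drho ((p : ℂ) • E₁) (drho ((p : ℂ) • E₁) (v n k))
      + drho ((p : ℂ) • E₂) (drho ((p : ℂ) • E₂) (v n k))
      + drho ((q : ℂ) • E₃) (drho ((q : ℂ) • E₃) (v n k)))
    = (((((-(p ^ 2) + q ^ 2) * ((n : ℝ) - 2 * k) ^ 2
          + p ^ 2 * ((n : ℝ) ^ 2 + 2 * n)) : ℝ)) : ℂ) • v n k := by
  unfold v
  simp only [drho_smul, ← smul_neg, ← smul_add]
  rw [key_all (n - k) k p q, smul_comm]
  congr 1
  push_cast [Nat.cast_sub hk]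
  ring
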